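/- The total progeny of a Galton–Watson branching process with offspring distribution A started from m ≥ 1 individuals has the same distribution as the first hitting time of 0 by the random walk S_n = m + Σ_{i=1}^n (V_i − 1), where V_i are i.i.d. with distribution A supported on ℕ; in particular the total progeny is finite if and only if the walk reaches 0. -/

import Mathlib

open MeasureTheory ProbabilityTheory

namespace GWaux

open Finset

/-- (size, start) of the `n`-th generation block of the word `w`. -/
def gb (m : ℕ) (w : ℕ → ℕ) : ℕ → ℕ × ℕ
  | 0 => (m, 0)
  | n+1 => (∑ j ∈ Finset.Ico (gb m w n).2 ((gb m w n).2 + (gb m w n).1), w j,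
      (gb m w n).2 + (gb m w n).1)

def gx (m : ℕ) (w : ℕ → ℕ) (n : ℕ) : ℕ := (gb m w n).1
def gB (m : ℕ) (w : ℕ → ℕ) (n : ℕ) : ℕ := (gb m w n).2

variable (m : ℕ) (w : ℕ → ℕ)

lemma gx_zero : gx m w 0 = m := rfl
lemma gB_zero : gB m w 0 = 0 := rfl
lemma gB_succ (n : ℕ) : gB m w (n+1) = gB m w n + gx m w n := rfl
lemma gx_succ (n : ℕ) :
    gx m w (n+1) = ∑ j ∈ Finset.Ico (gB m w n) (gB m w n + gx m w n), w j := rfl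

lemma gB_mono : Monotone (gB m w) :=
  monotone_nat_of_le_succ fun n => by rw [gB_succ]; exact Nat.le_add_right _ _

lemma gB_eq_sum (n : ℕ) : gB m w n = ∑ l ∈ range n, gx m w l := by
  induction n with
  | zero => rfl
  | succ n ih => rw [gB_succ, Finset.sum_range_succ, ih]

/-- partial sums of the walk with steps `w i - 1` started from `m`. -/
def ps (j : ℕ) : ℤ := (m : ℤ) + ∑ i ∈ range j, ((w i : ℤ) - 1)

lemma ps_congr {w' : ℕ → ℕ} {j : ℕ} (h : ∀ i < j, w i = w' i) : ps m w j = ps m w' j := by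
  unfold ps
  congr 1
  exact Finset.sum_congr rfl fun i hi => by rw [h i (Finset.mem_range.1 hi)]

lemma ps_gB (n : ℕ) : ps m w (gB m w n) = gx m w n := by
  induction n with
  | zero => simp [ps, gB_zero, gx_zero]
  | succ n ih =>
    have hsplit : ∑ i ∈ range (gB m w (n+1)), ((w i : ℤ) - 1)
        = ∑ i ∈ range (gB m w n), ((w i : ℤ) - 1)
          + ∑ i ∈ Finset.Ico (gB m w n) (gB m w (n+1)), ((w i : ℤ) - 1) := by
      rw [Finset.range_eq_Ico,
        ← Finset.sum_Ico_consecutive _ (Nat.zero_le _) (gB_mono m w (Nat.le_succ n))]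
      rw [Finset.range_eq_Ico]
    have hblock : ∑ i ∈ Finset.Ico (gB m w n) (gB m w (n+1)), ((w i : ℤ) - 1)
        = (gx m w (n+1) : ℤ) - (gx m w n : ℤ) := by
      rw [Finset.sum_sub_distrib]
      have h1 : ∑ i ∈ Finset.Ico (gB m w n) (gB m w (n+1)), (w i : ℤ)
          = ((∑ i ∈ Finset.Ico (gB m w n) (gB m w n + gx m w n), w i : ℕ) : ℤ) := by
        rw [gB_succ]; push_cast; ring_nf -- sums of casts
      rw [h1, ← gx_succ]
      simp [gB_succ, Nat.card_Ico]
    unfold ps at ih ⊢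
    rw [hsplit, hblock]
    omega
  
lemma ps_pos {n j : ℕ} (h1 : gB m w n ≤ j) (h2 : j < gB m w (n+1)) : 0 < ps m w j := by
  have hsplit : ps m w j = ps m w (gB m w n) + ∑ i ∈ Finset.Ico (gB m w n) j, ((w i : ℤ) - 1) := by
    unfold ps
    rw [Finset.range_eq_Ico, ← Finset.sum_Ico_consecutive _ (Nat.zero_le _) h1]
    rw [Finset.range_eq_Ico]
    ring
  have hge : ∑ i ∈ Finset.Ico (gB m w n) j, ((w i : ℤ) - 1) ≥ -(j - gB m w n : ℤ) := by
    calc ∑ i ∈ Finset.Ico (gB m w n) j, ((w i : ℤ) - 1)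
        ≥ ∑ _i ∈ Finset.Ico (gB m w n) j, (-1 : ℤ) :=
          Finset.sum_le_sum fun i _ => by omega
      _ = -(j - gB m w n : ℤ) := by
          rw [Finset.sum_const, Nat.card_Ico, nsmul_eq_mul]
          omega
  have hx := ps_gB m w n
  have h2' : (j : ℤ) - gB m w n < gx m w n := by
    have := gB_succ m w n
    omega
  omega

/-- every index below `gB N` lies in some block. -/
lemma block_cover {N j : ℕ} (h : j < gB m w N) :
    ∃ n < N, gB m w n ≤ j ∧ j < gB m w (n+1) := by
  induction N with
  | zero => simp [gB_zero] at h
  | succ N ih =>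
    by_cases hj : j < gB m w N
    · obtain ⟨n, hn, h1, h2⟩ := ih hj
      exact ⟨n, Nat.lt_succ_of_lt hn, h1, h2⟩
    · exact ⟨N, Nat.lt_succ_self N, Nat.le_of_not_lt hj, h⟩

lemma gx_stable {N : ℕ} (h : gx m w N = 0) :
    ∀ n, N ≤ n → gx m w n = 0 ∧ gB m w n = gB m w N := by
  intro n hn
  induction n with
  | zero => exact ⟨Nat.le_zero.1 hn ▸ h, by rw [Nat.le_zero.1 hn]⟩
  | succ n ih =>
    rcases Nat.lt_or_ge N (n+1) with hlt | hge
    · have hn' : N ≤ n := Nat.lt_succ_iff.1 hlt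
      obtain ⟨h1, h2⟩ := ih hn'
      constructor
      · rw [gx_succ, h1, h2]
        simp
      · rw [gB_succ, h1, h2, add_zero]
    · have : N = n + 1 := le_antisymm hn hge
      exact ⟨this ▸ h, by rw [this]⟩

def FirstHit (m k : ℕ) (w : ℕ → ℕ) : Prop := ps m w k = 0 ∧ ∀ j < k, ps m w j ≠ 0

lemma firstHit_of_structure {k N : ℕ} (h0 : gx m w N = 0) (hB : gB m w N = k) :
    FirstHit m k w := by
  constructor
  · rw [← hB, ps_gB, h0]; rfl
  · intro j hj
    rw [← hB] at hj
    obtain ⟨n, _, h1, h2⟩ := block_cover m w hj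
    exact (ps_pos m w h1 h2).ne'

lemma structure_of_firstHit {k : ℕ} (h : FirstHit m k w) :
    ∃ N, gx m w N = 0 ∧ gB m w N = k := by
  have hex : ∃ n, gx m w n = 0 := by
    by_contra hc
    push_neg at hc
    have hge : ∀ n, n ≤ gB m w n := by
      intro n
      induction n with
      | zero => exact Nat.zero_le _
      | succ n ih =>
        have := Nat.pos_of_ne_zero (hc n)
        rw [gB_succ]
        omega
    have hk : k < gB m w (k+1) := lt_of_lt_of_le (Nat.lt_succ_self k) (hge (k+1))
    obtain ⟨n, _, h1, h2⟩ := block_cover m w hk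
    exact (ps_pos m w h1 h2).ne' h.1
  set N := Nat.find hex with hN
  have h0 : gx m w N = 0 := Nat.find_spec hex
  refine ⟨N, h0, ?_⟩
  have hps : ps m w (gB m w N) = 0 := by rw [ps_gB, h0]; rfl
  rcases lt_trichotomy (gB m w N) k with hlt | heq | hgt
  · exact absurd hps (h.2 _ hlt)
  · exact heq
  · obtain ⟨n, _, h1, h2⟩ := block_cover m w hgt
    exact absurd h.1 (ps_pos m w h1 h2).ne'

lemma tsum_gx_eq {k N : ℕ} (h0 : gx m w N = 0) (hB : gB m w N = k) :
    ∑' n, (gx m w n : ℕ∞) = (k : ℕ∞) := by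
  have hz : ∀ n ∉ range N, ((gx m w n : ℕ∞)) = 0 := by
    intro n hn
    rw [(gx_stable m w h0 n (by simpa using hn)).1]
    rfl
  rw [tsum_eq_sum hz, ← Nat.cast_sum, ← gB_eq_sum, hB]

end GWaux

namespace GWaux2
open Finset GWaux

lemma blk_eq (B : ℕ → ℕ) (hB : Monotone B) {N n j : ℕ} (hn : n < N)
    (h1 : B n ≤ j) (h2 : j < B (n+1)) :
    Nat.findGreatest (fun l => B l ≤ j) N = n := by
  have hle : Nat.findGreatest (fun l => B l ≤ j) N ≤ n := by
    by_contra hc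
    push_neg at hc
    have hspec : B (Nat.findGreatest (fun l => B l ≤ j) N) ≤ j :=
      Nat.findGreatest_spec (P := fun l => B l ≤ j) hn.le h1
    have : B (n+1) ≤ B (Nat.findGreatest (fun l => B l ≤ j) N) := hB hc
    omega
  exact le_antisymm hle (Nat.le_findGreatest hn.le h1)

def Bof (x : ℕ → ℕ) (n : ℕ) : ℕ := ∑ l ∈ Finset.range n, x l

lemma Bof_mono (x : ℕ → ℕ) : Monotone (Bof x) := by
  intro a b hab
  exact Finset.sum_le_sum_of_subset (Finset.range_subset_range.2 hab)

lemma Bof_succ (x : ℕ → ℕ) (n : ℕ) : Bof x (n+1) = Bof x n + x n :=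
  Finset.sum_range_succ x n

def wof (v : ℕ × ℕ → ℕ) (x : ℕ → ℕ) (N : ℕ) (j : ℕ) : ℕ :=
  if j < Bof x N then
    v (Nat.findGreatest (fun l => Bof x l ≤ j) N,
      j - Bof x (Nat.findGreatest (fun l => Bof x l ≤ j) N))
  else 0

section construct
variable (m : ℕ) (v : ℕ × ℕ → ℕ) (x : ℕ → ℕ) (N : ℕ)
variable (hx0 : x 0 = m) (hxs : ∀ n, x (n+1) = ∑ i ∈ Finset.range (x n), v (n, i))
variable (hN : x N = 0)

include hxs in
lemma x_stable : ∀ l n, l ≤ n → x l = 0 → x n = 0 := by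
  intro l n hln h0
  induction n with
  | zero => exact Nat.le_zero.1 hln ▸ h0
  | succ n ih =>
    rcases Nat.lt_or_ge l (n+1) with hlt | hge
    · have := ih (Nat.lt_succ_iff.1 hlt)
      rw [hxs n, this]
      simp
    · exact (le_antisymm hln hge) ▸ h0

include hx0 hxs hN in
lemma wof_spec :
    (∀ n, gx m (wof v x N) n = x n ∧ gB m (wof v x N) n = Bof x n) ∧
      (∀ n i, i < x n → wof v x N (Bof x n + i) = v (n, i)) := by
  have hwval : ∀ n, n < N → ∀ j, Bof x n ≤ j → j < Bof x (n+1) →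
      wof v x N j = v (n, j - Bof x n) := by
    intro n hn j h1 h2
    have hjN : j < Bof x N := lt_of_lt_of_le h2 (Bof_mono x hn)
    rw [wof, if_pos hjN, blk_eq (Bof x) (Bof_mono x) hn h1 h2]
  have hnN : ∀ n, x n ≠ 0 → n < N := by
    intro n hne
    by_contra hc
    exact hne (x_stable v x hxs N n (Nat.le_of_not_lt hc) hN)
  have hmain : ∀ n, gx m (wof v x N) n = x n ∧ gB m (wof v x N) n = Bof x n := by
    intro n
    induction n with
    | zero => exact ⟨hx0.symm, rfl⟩
    | succ n ih =>
      obtain ⟨ihx, ihB⟩ := ih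
      have hBsucc : gB m (wof v x N) (n+1) = Bof x (n+1) := by
        rw [gB_succ, ihx, ihB, Bof_succ]
      refine ⟨?_, hBsucc⟩
      rw [gx_succ, ihx, ihB]
      by_cases hxn : x n = 0
      · rw [hxn, add_zero, Finset.Ico_self, Finset.sum_empty, hxs, hxn]
        simp
      · have hn : n < N := hnN n hxn
        rw [Finset.sum_Ico_eq_sum_range]
        have hcard : Bof x n + x n - Bof x n = x n := Nat.add_sub_cancel_left _ _
        rw [hcard, hxs]
        refine Finset.sum_congr rfl fun i hi => ?_
        have hi' : i < x n := Finset.mem_range.1 hi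
        have h2 : Bof x n + i < Bof x (n+1) := by rw [Bof_succ]; omega
        rw [hwval n hn _ (Nat.le_add_right _ _) h2, Nat.add_sub_cancel_left]
  refine ⟨hmain, fun n i hi => ?_⟩
  have hn : n < N := hnN n (by omega)
  have h2 : Bof x n + i < Bof x (n+1) := by rw [Bof_succ]; omega
  rw [hwval n hn _ (Nat.le_add_right _ _) h2, Nat.add_sub_cancel_left]

end construct

/-- matching: if the offspring values agree with the word `w` along the blocks,
then the generation sizes equal the block sizes of `w`. -/
lemma match_x (m : ℕ) (w : ℕ → ℕ) (v : ℕ × ℕ → ℕ) (x : ℕ → ℕ)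
    (hx0 : x 0 = m) (hxs : ∀ n, x (n+1) = ∑ i ∈ Finset.range (x n), v (n, i))
    (h : ∀ n i, i < gx m w n → v (n, i) = w (gB m w n + i)) :
    ∀ n, x n = gx m w n := by
  intro n
  induction n with
  | zero => exact hx0
  | succ n ih =>
    rw [hxs, ih, gx_succ, Finset.sum_Ico_eq_sum_range, Nat.add_sub_cancel_left]
    exact Finset.sum_congr rfl fun i hi => h n i (Finset.mem_range.1 hi)

end GWaux2

namespace GWaux3
open Finset MeasureTheory ProbabilityTheory GWaux GWaux2

/-- the index type for the disjoint decompositions: words realizing a first hit at `k`. -/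
def Idx (m k : ℕ) : Type := {w : ℕ → ℕ // FirstHit m k w ∧ ∀ j, k ≤ j → w j = 0}

instance (m k : ℕ) : Countable (Idx m k) := by
  have hinj : Function.Injective (fun w : Idx m k => (fun j : Fin k => w.1 j)) := by
    intro w w' h
    apply Subtype.ext; funext j
    rcases Nat.lt_or_ge j k with hj | hj
    · exact congrFun h ⟨j, hj⟩
    · rw [w.2.2 j hj, w'.2.2 j hj]
  exact hinj.countable

variable {Ω : Type*} {mΩ : MeasurableSpace Ω} (μ : Measure Ω)

lemma walk_event_measure (A : ℕ → ENNReal) (W : ℕ → Ω → ℕ)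
    (hWindep : iIndepFun W μ)
    (hWdist : ∀ i n, μ {ω | W i ω = n} = A n) (k : ℕ) (w : ℕ → ℕ) :
    μ {ω | ∀ j < k, W j ω = w j} = ∏ j ∈ Finset.range k, A (w j) := by
  have hset : {ω | ∀ j < k, W j ω = w j} = ⋂ j ∈ Finset.range k, (W j)⁻¹' {w j} := by
    ext ω
    simp [Set.mem_iInter]
  rw [hset, hWindep.meas_biInter (fun j _ => ⟨{w j}, measurableSet_singleton _, rfl⟩)]
  refine Finset.prod_congr rfl fun j _ => ?_
  rw [← hWdist j (w j)]
  rfl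

lemma branch_event_measure (A : ℕ → ENNReal) (V : ℕ × ℕ → Ω → ℕ)
    (hVindep : iIndepFun V μ)
    (hVdist : ∀ p n, μ {ω | V p ω = n} = A n) (m k : ℕ) (w : ℕ → ℕ)
    (hw : FirstHit m k w) :
    μ {ω | ∀ n, ∀ i < gx m w n, V (n, i) ω = w (gB m w n + i)}
      = ∏ j ∈ Finset.range k, A (w j) := by
  obtain ⟨N, h0, hB⟩ := structure_of_firstHit m w hw
  have hgxk : ∀ n, n < N → gx m w n ≤ k := by
    intro n hn
    have h1 : gB m w n + gx m w n = gB m w (n+1) := (gB_succ m w n).symm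
    have h2 : gB m w (n+1) ≤ gB m w N := gB_mono m w hn
    omega
  set U : Finset (ℕ × ℕ) :=
    ((Finset.range N) ×ˢ (Finset.range k)).filter (fun p => p.2 < gx m w p.1) with hU
  have hset : {ω | ∀ n, ∀ i < gx m w n, V (n, i) ω = w (gB m w n + i)}
      = ⋂ p ∈ U, (V p)⁻¹' {w (gB m w p.1 + p.2)} := by
    ext ω
    simp only [Set.mem_setOf_eq, Set.mem_iInter, hU, Finset.mem_filter, Finset.mem_product,
      Finset.mem_range, Set.mem_preimage, Set.mem_singleton_iff]
    constructor
    · rintro h ⟨n, i⟩ ⟨⟨-, -⟩, hi⟩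
      exact h n i hi
    · intro h n i hi
      have hnN : n < N := by
        by_contra hc
        rw [(gx_stable m w h0 n (Nat.le_of_not_lt hc)).1] at hi
        omega
      have hik : i < k := lt_of_lt_of_le hi (hgxk n hnN)
      exact h (n, i) ⟨⟨hnN, hik⟩, hi⟩
  rw [hset, hVindep.meas_biInter (fun p _ => ⟨{w (gB m w p.1 + p.2)}, measurableSet_singleton _, rfl⟩)]
  have hval : ∀ p ∈ U, μ ((V p)⁻¹' {w (gB m w p.1 + p.2)}) = A (w (gB m w p.1 + p.2)) := by
    intro p _
    rw [← hVdist p (w (gB m w p.1 + p.2))]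
    rfl
  rw [Finset.prod_congr rfl hval]
  have hUmem : ∀ p : ℕ × ℕ, p ∈ U ↔ p.1 < N ∧ p.2 < k ∧ p.2 < gx m w p.1 := by
    intro p
    simp only [hU, Finset.mem_filter, Finset.mem_product, Finset.mem_range]
    tauto
  refine Finset.prod_nbij (fun p => gB m w p.1 + p.2) ?_ ?_ ?_ ?_
  · rintro ⟨n, i⟩ hp
    obtain ⟨hn, -, hi⟩ := (hUmem _).1 hp
    replace hn : n < N := hn
    replace hi : i < gx m w n := hi
    have hlt : gB m w n + i < gB m w (n+1) := by rw [gB_succ]; omega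
    have h2 : gB m w (n+1) ≤ gB m w N := gB_mono m w hn
    have hgoal : gB m w n + i < k := by omega
    exact Finset.mem_range.2 hgoal
  · rintro ⟨n, i⟩ hp ⟨n', i'⟩ hp' heq
    obtain ⟨hn, -, hi⟩ := (hUmem _).1 (Finset.mem_coe.1 hp)
    obtain ⟨hn', -, hi'⟩ := (hUmem _).1 (Finset.mem_coe.1 hp')
    replace hi : i < gx m w n := hi
    replace hi' : i' < gx m w n' := hi'
    replace heq : gB m w n + i = gB m w n' + i' := heq
    have hkey : ∀ a b ia ib, ia < gx m w a → ib < gx m w b → a < b →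
        gB m w a + ia < gB m w b + ib := by
      intro a b ia ib ha hb hab
      have h1 : gB m w a + ia < gB m w (a+1) := by rw [gB_succ]; omega
      have h2 : gB m w (a+1) ≤ gB m w b := gB_mono m w hab
      omega
    rcases lt_trichotomy n n' with h | h | h
    · exact absurd heq (hkey n n' i i' hi hi' h).ne
    · subst h
      have : i = i' := by omega
      rw [this]
    · exact absurd heq.symm (hkey n' n i' i hi' hi h).ne
  · intro j hj
    simp only [Finset.coe_range, Set.mem_Iio] at hj
    have hjB : j < gB m w N := by omega
    obtain ⟨n, hn, h1, h2⟩ := block_cover m w hjB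
    refine ⟨(n, j - gB m w n), Finset.mem_coe.2 ((hUmem _).2 ?_), ?_⟩
    · have : j - gB m w n < gx m w n := by
        have := gB_succ m w n
        omega
      exact ⟨hn, by omega, this⟩
    · simp only
      omega
  · intro p _
    rfl

end GWaux3

namespace GWaux4
open Finset MeasureTheory ProbabilityTheory GWaux GWaux2 GWaux3

lemma enat_summable {α : Type*} (f : α → ℕ∞) : Summable f :=
  ⟨_, tendsto_atTop_iSup fun _ _ => Finset.sum_le_sum_of_subset⟩

variable {Ω : Type*}

lemma branch_cover (V : ℕ × ℕ → Ω → ℕ) (X : ℕ → Ω → ℕ) (m k : ℕ)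
    (hX0 : ∀ ω, X 0 ω = m)
    (hXsucc : ∀ n ω, X (n + 1) ω = ∑ i ∈ Finset.range (X n ω), V (n, i) ω) :
    {ω | (∑' n, (X n ω : ℕ∞)) = (k : ℕ∞)}
      = ⋃ w : Idx m k, {ω | ∀ n, ∀ i < gx m w.1 n, V (n, i) ω = w.1 (gB m w.1 n + i)} := by
  ext ω
  simp only [Set.mem_setOf_eq, Set.mem_iUnion]
  constructor
  · intro hω
    -- the generations eventually die out
    have hfin : ∃ n, X n ω = 0 := by
      by_contra hc
      push_neg at hc
      have h1 : ∀ n ∈ Finset.range (k+1), (1 : ℕ∞) ≤ (X n ω : ℕ∞) := by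
        intro n _
        exact_mod_cast Nat.one_le_iff_ne_zero.2 (hc n)
      have h2 : ((k : ℕ∞) + 1) ≤ ∑ n ∈ Finset.range (k+1), (X n ω : ℕ∞) := by
        calc ((k : ℕ∞) + 1) = ∑ _n ∈ Finset.range (k+1), (1 : ℕ∞) := by
              rw [Finset.sum_const, Finset.card_range, nsmul_eq_mul, mul_one]
              push_cast
              ring
          _ ≤ _ := Finset.sum_le_sum h1
      have h3 : ∑ n ∈ Finset.range (k+1), (X n ω : ℕ∞) ≤ ∑' n, (X n ω : ℕ∞) :=
        Summable.sum_le_tsum _ (fun _ _ => zero_le) (enat_summable _)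
      rw [hω] at h3
      have : ((k:ℕ∞) + 1) ≤ (k:ℕ∞) := le_trans h2 h3
      have hklt : (k : ℕ∞) < (k : ℕ∞) + 1 := by
        rw [← Nat.cast_one, ← Nat.cast_add]
        exact_mod_cast Nat.lt_succ_self k
      exact absurd this (not_le.2 hklt)
    obtain ⟨N, hN⟩ := hfin
    set x : ℕ → ℕ := fun n => X n ω with hx
    set v : ℕ × ℕ → ℕ := fun p => V p ω with hv
    have hx0 : x 0 = m := hX0 ω
    have hxs : ∀ n, x (n+1) = ∑ i ∈ Finset.range (x n), v (n, i) := fun n => hXsucc n ω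
    obtain ⟨hgen, hvals⟩ := wof_spec m v x N hx0 hxs hN
    -- identify `k`
    have htot : (Bof x N : ℕ∞) = (k : ℕ∞) := by
      rw [← hω]
      have hz : ∀ n ∉ Finset.range N, ((X n ω : ℕ∞)) = 0 := by
        intro n hn
        have : x n = 0 := x_stable v x hxs N n (by simpa using hn) hN
        exact_mod_cast this
      rw [tsum_eq_sum hz, ← Nat.cast_sum]
      rfl
    have hBk : Bof x N = k := by exact_mod_cast htot
    refine ⟨⟨wof v x N, ?_, ?_⟩, ?_⟩
    · exact firstHit_of_structure m _ ((hgen N).1.trans hN) (((hgen N).2).trans hBk)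
    · intro j hj
      rw [wof, if_neg (by omega)]
    · intro n i hi
      have hgx : gx m (wof v x N) n = x n := (hgen n).1
      have hgB : gB m (wof v x N) n = Bof x n := (hgen n).2
      rw [hgx] at hi
      rw [hgB]
      exact (hvals n i hi).symm
  · rintro ⟨w, hw⟩
    have hxeq : ∀ n, X n ω = gx m w.1 n :=
      match_x m w.1 (fun p => V p ω) (fun n => X n ω) (hX0 ω) (fun n => hXsucc n ω)
        (fun n i hi => hw n i hi)
    obtain ⟨N, h0, hB⟩ := structure_of_firstHit m w.1 w.2.1
    calc ∑' n, (X n ω : ℕ∞) = ∑' n, (gx m w.1 n : ℕ∞) := by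
          exact tsum_congr fun n => by rw [hxeq n]
      _ = (k : ℕ∞) := tsum_gx_eq m w.1 h0 hB

lemma walk_cover (W : ℕ → Ω → ℕ) (m k : ℕ) :
    {ω | FirstHit m k (fun i => W i ω)}
      = ⋃ w : Idx m k, {ω | ∀ j < k, W j ω = w.1 j} := by
  ext ω
  simp only [Set.mem_setOf_eq, Set.mem_iUnion]
  constructor
  · intro hω
    refine ⟨⟨fun j => if j < k then W j ω else 0, ⟨?_, ?_⟩, fun j hj => if_neg (by omega)⟩,
      fun j hj => (if_pos hj).symm⟩
    · rw [← hω.1]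
      exact (ps_congr m _ fun i hi => (if_pos (by omega)).symm).symm
    · intro j hj
      have hcongr := ps_congr m (fun i => if i < k then W i ω else 0)
        (w' := fun i => W i ω) (j := j) (fun i hi => if_pos (by omega))
      rw [hcongr]
      exact hω.2 j hj
  · rintro ⟨w, hw⟩
    constructor
    · rw [ps_congr m _ fun i hi => hw i (by omega)]
      exact w.2.1.1
    · intro j hj
      rw [ps_congr m _ fun i hi => hw i (by omega)]
      exact w.2.1.2 j hj

lemma sInf_image_eq_coe {s : Set ℕ} {k : ℕ} :
    sInf ((fun n : ℕ => (n : ℕ∞)) '' s) = (k : ℕ∞) ↔ k ∈ s ∧ ∀ j < k, j ∉ s := by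
  have himg : s.Nonempty → sInf ((fun n : ℕ => (n : ℕ∞)) '' s) = ((sInf s : ℕ) : ℕ∞) := by
    intro hne
    refine le_antisymm (sInf_le ⟨_, Nat.sInf_mem hne, rfl⟩) (le_sInf ?_)
    rintro _ ⟨n, hn, rfl⟩
    exact Nat.cast_le.2 (Nat.sInf_le hn)
  constructor
  · intro h
    have hne : s.Nonempty := by
      by_contra hc
      rw [Set.not_nonempty_iff_eq_empty.1 hc, Set.image_empty, sInf_empty] at h
      exact (ENat.top_ne_coe k) h
    rw [himg hne] at h
    have hk : sInf s = k := by exact_mod_cast h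
    exact ⟨hk ▸ Nat.sInf_mem hne, fun j hj => Nat.notMem_of_lt_sInf (hk ▸ hj)⟩
  · rintro ⟨hk, hlt⟩
    have hne : s.Nonempty := ⟨k, hk⟩
    rw [himg hne]
    have : sInf s = k := by
      refine le_antisymm (Nat.sInf_le hk) ?_
      by_contra hc
      push_neg at hc
      exact hlt _ hc (Nat.sInf_mem hne)
    exact_mod_cast this

lemma sInf_image_ne_top {s : Set ℕ} :
    sInf ((fun n : ℕ => (n : ℕ∞)) '' s) ≠ ⊤ ↔ s.Nonempty := by
  constructor
  · intro h
    by_contra hc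
    rw [Set.not_nonempty_iff_eq_empty.1 hc, Set.image_empty, sInf_empty] at h
    exact h rfl
  · rintro ⟨n, hn⟩
    exact ne_top_of_le_ne_top (ENat.coe_ne_top n) (sInf_le ⟨n, hn, rfl⟩)

end GWaux4


open MeasureTheory ProbabilityTheory GWaux GWaux2 GWaux3 GWaux4

open GWaux GWaux2 GWaux3 GWaux4

/-- The total progeny of a Galton–Watson process with offspring distribution `A`
started from `m ≥ 1` individuals has the same distribution as the first hitting time
of `0` by the random walk `S_n = m + Σ_{i=1}^n (V_i − 1)` with i.i.d. steps `V_i − 1`,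
`V_i ∼ A`; in particular the total progeny is finite iff the walk reaches `0`
(with the same probability). -/
theorem total_progeny_eq_hitting_time
    {Ω : Type*} {mΩ : MeasurableSpace Ω} (μ : Measure Ω) [IsProbabilityMeasure μ]
    (A : ℕ → ENNReal) (hA : ∑' n, A n = 1)
    (m : ℕ) (hm : 1 ≤ m)
    -- the offspring variables of the branching process: `V n i` is the number of
    -- children of the `i`-th individual of generation `n`
    (V : ℕ × ℕ → Ω → ℕ) (hVmeas : ∀ k, Measurable (V k))
    (hVindep : iIndepFun V μ)
    (hVdist : ∀ k n, μ {ω | V k ω = n} = A n)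
    -- the generation sizes: `X 0 = m`, `X (n+1) = ` sum of `X n` copies of `V`
    (X : ℕ → Ω → ℕ)
    (hX0 : ∀ ω, X 0 ω = m)
    (hXsucc : ∀ n ω, X (n + 1) ω = ∑ i ∈ Finset.range (X n ω), V (n, i) ω)
    -- the steps of the random walk, i.i.d. with the same distribution `A`
    (W : ℕ → Ω → ℕ) (hWmeas : ∀ i, Measurable (W i))
    (hWindep : iIndepFun W μ)
    (hWdist : ∀ i n, μ {ω | W i ω = n} = A n)
    (S : ℕ → Ω → ℤ)
    (hS : ∀ n ω, S n ω = (m : ℤ) + ∑ i ∈ Finset.range n, ((W i ω : ℤ) - 1))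
    -- total progeny and first hitting time of the origin, valued in `ℕ∞`
    (Y T : Ω → ℕ∞)
    (hY : ∀ ω, Y ω = ∑' n, (X n ω : ℕ∞))
    (hT : ∀ ω, T ω = sInf ((fun n : ℕ => (n : ℕ∞)) '' {n | S n ω = 0})) :
    (∀ k : ℕ∞, μ {ω | Y ω = k} = μ {ω | T ω = k}) ∧
      μ {ω | Y ω ≠ ⊤} = μ {ω | ∃ n, S n ω = 0} := by
  classical
  -- relation between S and the abstract partial sums
  have hSps : ∀ n ω, S n ω = ps m (fun i => W i ω) n := fun n ω => hS n ω
  -- set identities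
  have hYset : ∀ k : ℕ, {ω | Y ω = (k : ℕ∞)}
      = ⋃ w : Idx m k, {ω | ∀ n, ∀ i < gx m w.1 n, V (n, i) ω = w.1 (gB m w.1 n + i)} := by
    intro k
    rw [← branch_cover V X m k hX0 hXsucc]
    ext ω
    rw [Set.mem_setOf_eq, Set.mem_setOf_eq, hY ω]
  have hTset : ∀ k : ℕ, {ω | T ω = (k : ℕ∞)}
      = ⋃ w : Idx m k, {ω | ∀ j < k, W j ω = w.1 j} := by
    intro k
    rw [← walk_cover W m k]
    ext ω
    rw [Set.mem_setOf_eq, Set.mem_setOf_eq, hT ω, sInf_image_eq_coe]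
    constructor
    · rintro ⟨h1, h2⟩
      replace h1 : S k ω = 0 := h1
      rw [hSps] at h1
      refine ⟨h1, fun j hj hps => h2 j hj ?_⟩
      rw [Set.mem_setOf_eq, hSps]
      exact hps
    · rintro ⟨h1, h2⟩
      refine ⟨?_, fun j hj hmem => ?_⟩
      · rw [Set.mem_setOf_eq, hSps]
        exact h1
      · replace hmem : S j ω = 0 := hmem
        rw [hSps] at hmem
        exact h2 j hj hmem
  -- measurability
  have hEbrMeas : ∀ (k : ℕ) (w : Idx m k),
      MeasurableSet {ω | ∀ n, ∀ i < gx m w.1 n, V (n, i) ω = w.1 (gB m w.1 n + i)} := by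
    intro k w
    have : {ω | ∀ n, ∀ i < gx m w.1 n, V (n, i) ω = w.1 (gB m w.1 n + i)}
        = ⋂ n, ⋂ i, ⋂ (_ : i < gx m w.1 n), (V (n, i))⁻¹' {w.1 (gB m w.1 n + i)} := by
      ext ω
      simp [Set.mem_iInter]
    rw [this]
    exact .iInter fun n => .iInter fun i => .iInter fun _ =>
      hVmeas _ (measurableSet_singleton _)
  have hEwkMeas : ∀ (k : ℕ) (w : Idx m k), MeasurableSet {ω | ∀ j < k, W j ω = w.1 j} := by
    intro k w
    have : {ω | ∀ j < k, W j ω = w.1 j}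
        = ⋂ j, ⋂ (_ : j < k), (W j)⁻¹' {w.1 j} := by
      ext ω
      simp [Set.mem_iInter]
    rw [this]
    exact .iInter fun j => .iInter fun _ => hWmeas _ (measurableSet_singleton _)
  -- pairwise disjointness
  have hdisjY : ∀ k : ℕ, Pairwise (Function.onFun Disjoint
      (fun w : Idx m k =>
        {ω | ∀ n, ∀ i < gx m w.1 n, V (n, i) ω = w.1 (gB m w.1 n + i)})) := by
    intro k w w' hne
    refine Set.disjoint_left.2 fun ω h1 h2 => hne ?_
    rw [Set.mem_setOf_eq] at h1 h2
    have xeq : ∀ n, X n ω = gx m w.1 n :=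
      match_x m w.1 (fun p => V p ω) (fun n => X n ω) (hX0 ω) (fun n => hXsucc n ω) h1
    have xeq' : ∀ n, X n ω = gx m w'.1 n :=
      match_x m w'.1 (fun p => V p ω) (fun n => X n ω) (hX0 ω) (fun n => hXsucc n ω) h2
    have hgx : ∀ n, gx m w.1 n = gx m w'.1 n := fun n => (xeq n).symm.trans (xeq' n)
    have hgB : ∀ n, gB m w.1 n = gB m w'.1 n := by
      intro n
      rw [gB_eq_sum, gB_eq_sum]
      exact Finset.sum_congr rfl fun l _ => hgx l
    obtain ⟨N, h0, hB⟩ := structure_of_firstHit m w.1 w.2.1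
    apply Subtype.ext
    funext j
    rcases Nat.lt_or_ge j k with hj | hj
    · obtain ⟨n, hn, hj1, hj2⟩ := block_cover m w.1 (hB ▸ hj)
      have hi : j - gB m w.1 n < gx m w.1 n := by
        have := gB_succ m w.1 n
        omega
      have hi' : j - gB m w'.1 n < gx m w'.1 n := by
        rw [← hgx, ← hgB]
        exact hi
      have e1 := h1 n (j - gB m w.1 n) hi
      have e2 := h2 n (j - gB m w'.1 n) hi'
      rw [Nat.add_sub_cancel' hj1] at e1
      rw [← hgB, Nat.add_sub_cancel' hj1] at e2
      rw [← e1, ← e2]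
    · rw [w.2.2 j hj, w'.2.2 j hj]
  have hdisjT : ∀ k : ℕ, Pairwise (Function.onFun Disjoint
      (fun w : Idx m k => {ω | ∀ j < k, W j ω = w.1 j})) := by
    intro k w w' hne
    refine Set.disjoint_left.2 fun ω h1 h2 => hne ?_
    rw [Set.mem_setOf_eq] at h1 h2
    apply Subtype.ext
    funext j
    rcases Nat.lt_or_ge j k with hj | hj
    · rw [← h1 j hj, ← h2 j hj]
    · rw [w.2.2 j hj, w'.2.2 j hj]
  -- the main computation for finite k
  have hmeasK : ∀ k : ℕ, μ {ω | Y ω = (k : ℕ∞)} = μ {ω | T ω = (k : ℕ∞)} := by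
    intro k
    rw [hYset k, hTset k, measure_iUnion (hdisjY k) (hEbrMeas k),
      measure_iUnion (hdisjT k) (hEwkMeas k)]
    refine tsum_congr fun w => ?_
    rw [branch_event_measure μ A V hVindep hVdist m k w.1 w.2.1,
      walk_event_measure μ A W hWindep hWdist k w.1]
  -- measurability of the level sets
  have hYmeas : ∀ k : ℕ, MeasurableSet {ω | Y ω = (k : ℕ∞)} := by
    intro k
    rw [hYset k]
    exact .iUnion (hEbrMeas k)
  have hTmeas : ∀ k : ℕ, MeasurableSet {ω | T ω = (k : ℕ∞)} := by
    intro k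
    rw [hTset k]
    exact .iUnion (hEwkMeas k)
  -- the union over finite values
  have hne_top : ∀ (f : Ω → ℕ∞), {ω | f ω ≠ ⊤} = ⋃ k : ℕ, {ω | f ω = (k : ℕ∞)} := by
    intro f
    ext ω
    simp only [Set.mem_setOf_eq, Set.mem_iUnion]
    constructor
    · intro h
      obtain ⟨b, hb⟩ := WithTop.ne_top_iff_exists.1 h
      exact ⟨b, hb.symm⟩
    · rintro ⟨k, hk⟩
      rw [hk]
      exact ENat.coe_ne_top k
  have hdisjK : ∀ (f : Ω → ℕ∞), Pairwise (Function.onFun Disjoint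
      (fun k : ℕ => {ω | f ω = (k : ℕ∞)})) := by
    intro f k k' hne
    refine Set.disjoint_left.2 fun ω h1 h2 => hne ?_
    rw [Set.mem_setOf_eq] at h1 h2
    exact_mod_cast h1.symm.trans h2
  have hYunion : μ {ω | Y ω ≠ ⊤} = ∑' k : ℕ, μ {ω | Y ω = (k : ℕ∞)} := by
    rw [hne_top Y, measure_iUnion (hdisjK Y) hYmeas]
  have hTunion : μ {ω | T ω ≠ ⊤} = ∑' k : ℕ, μ {ω | T ω = (k : ℕ∞)} := by
    rw [hne_top T, measure_iUnion (hdisjK T) hTmeas]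
  have hfin_eq : μ {ω | Y ω ≠ ⊤} = μ {ω | T ω ≠ ⊤} := by
    rw [hYunion, hTunion]
    exact tsum_congr hmeasK
  constructor
  · intro k
    induction k using ENat.recTopCoe with
    | top =>
      have hYc : {ω | Y ω = ⊤} = {ω | Y ω ≠ ⊤}ᶜ := by
        ext ω
        simp [Set.mem_setOf_eq]
      have hTc : {ω | T ω = ⊤} = {ω | T ω ≠ ⊤}ᶜ := by
        ext ω
        simp [Set.mem_setOf_eq]
      have hYm : MeasurableSet {ω | Y ω ≠ ⊤} := by
        rw [hne_top Y]
        exact .iUnion hYmeas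
      have hTm : MeasurableSet {ω | T ω ≠ ⊤} := by
        rw [hne_top T]
        exact .iUnion hTmeas
      rw [hYc, hTc, measure_compl hYm (measure_ne_top μ _),
        measure_compl hTm (measure_ne_top μ _), hfin_eq]
    | coe k => exact hmeasK k
  · have hSset : {ω | ∃ n, S n ω = 0} = {ω | T ω ≠ ⊤} := by
      ext ω
      rw [Set.mem_setOf_eq, Set.mem_setOf_eq, hT ω, sInf_image_ne_top]
      exact ⟨fun ⟨n, hn⟩ => ⟨n, hn⟩, fun ⟨n, hn⟩ => ⟨n, hn⟩⟩
    rw [hSset]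
    exact hfin_eq
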